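/- (Equality case of the mixture majorization inequality.) Let f, g ∈ P₂(ℝ) have continuous, strictly positive probability density functions, with F the CDF of f (with inverse F^{-1}) and G the CDF of g. Let f = Σ_{k=1}^K π_k f_k be a mixture decomposition with weights π_k ≥ 0 summing to one and continuous component densities f_k. Define, for k = 1,…,K, g_k(x) = g(x) · f_k(F^{-1}(G(x))) / Σ_{l=1}^K π_l f_l(F^{-1}(G(x))) for x ∈ ℝ. Then g = Σ_{k=1}^K π_k g_k is a mixture decomposition of g, and equality holds in the majorization inequality: W₂²(f, g) = Σ_{k=1}^K π_k W₂²(f_k, g_k). -/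

import Mathlib

open MeasureTheory ProbabilityTheory ENNReal Filter

/-- Squared 2-Wasserstein distance between two measures on `ℝ`, defined as the infimum of
`∫ (x - y)^2 dγ` over all coupling probability measures `γ` with the given marginals. -/
noncomputable def W2sq (μ ν : MeasureTheory.Measure ℝ) : ℝ≥0∞ :=
  ⨅ (γ : MeasureTheory.Measure (ℝ × ℝ)) (_ : MeasureTheory.IsProbabilityMeasure γ)
    (_ : γ.map Prod.fst = μ) (_ : γ.map Prod.snd = ν),
    ∫⁻ p, ENNReal.ofReal ((p.1 - p.2) ^ 2) ∂γ

/-- The 2-Wasserstein distance `W₂`. -/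
noncomputable def W2 (μ ν : MeasureTheory.Measure ℝ) : ℝ :=
  Real.sqrt (W2sq μ ν).toReal

/-- `μ ∈ P₂(ℝ)`: a Borel probability measure on `ℝ` with finite second moment. -/
def MemP2 (μ : MeasureTheory.Measure ℝ) : Prop :=
  MeasureTheory.IsProbabilityMeasure μ ∧ (∫⁻ x, ENNReal.ofReal (x ^ 2) ∂μ) < ⊤


open Set in
noncomputable def vd (d : ℝ → ℝ) : Measure ℝ :=
  MeasureTheory.volume.withDensity (fun x => ENNReal.ofReal (d x))

lemma vd_Ioc (d : ℝ → ℝ) (hdc : Continuous d) (hdnn : ∀ x, 0 ≤ d x) {a b : ℝ} (hab : a ≤ b) :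
    vd d (Set.Ioc a b) = ENNReal.ofReal (∫ t in a..b, d t) := by
  rw [vd, withDensity_apply _ measurableSet_Ioc,
    intervalIntegral.integral_of_le hab,
    ofReal_integral_eq_lintegral_ofReal
      (hdc.integrableOn_Ioc) (Filter.Eventually.of_forall fun x => hdnn x)]

lemma cdf_sub_cdf (d : ℝ → ℝ) (hdc : Continuous d) (hdnn : ∀ x, 0 ≤ d x)
    [IsProbabilityMeasure (vd d)] {a b : ℝ} (hab : a ≤ b) :
    cdf (vd d) b - cdf (vd d) a = ∫ t in a..b, d t := by
  have hsplit : vd d (Set.Iic b) = vd d (Set.Iic a) + vd d (Set.Ioc a b) := by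
    rw [← measure_union (Set.Iic_disjoint_Ioc le_rfl) measurableSet_Ioc,
      Set.Iic_union_Ioc_eq_Iic hab]
  rw [cdf_eq_real, cdf_eq_real, measureReal_def, measureReal_def, hsplit, vd_Ioc d hdc hdnn hab]
  rw [ENNReal.toReal_add (measure_ne_top _ _) (by simp)]
  rw [ENNReal.toReal_ofReal (intervalIntegral.integral_nonneg hab (fun u _ => hdnn u))]
  ring

lemma cdf_primitive (d : ℝ → ℝ) (hdc : Continuous d) (hdnn : ∀ x, 0 ≤ d x)
    [IsProbabilityMeasure (vd d)] (x : ℝ) :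
    cdf (vd d) x = cdf (vd d) 0 + ∫ t in (0:ℝ)..x, d t := by
  rcases le_total 0 x with h | h
  · have := cdf_sub_cdf d hdc hdnn h; linarith
  · have := cdf_sub_cdf d hdc hdnn h
    rw [intervalIntegral.integral_symm]
    linarith

lemma cdf_cont (d : ℝ → ℝ) (hdc : Continuous d) (hdnn : ∀ x, 0 ≤ d x)
    [IsProbabilityMeasure (vd d)] : Continuous (cdf (vd d)) := by
  have : (fun x => cdf (vd d) x) = fun x => cdf (vd d) 0 + ∫ t in (0:ℝ)..x, d t := by
    funext x; exact cdf_primitive d hdc hdnn x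
  rw [show (cdf (vd d) : ℝ → ℝ) = fun x => cdf (vd d) x from rfl, this]
  exact continuous_const.add
    (intervalIntegral.continuous_primitive (fun a b => hdc.intervalIntegrable a b) 0)

lemma cdf_smono (d : ℝ → ℝ) (hdc : Continuous d) (hdpos : ∀ x, 0 < d x)
    [IsProbabilityMeasure (vd d)] : StrictMono (cdf (vd d)) := by
  intro a b hab
  have h := cdf_sub_cdf d hdc (fun x => (hdpos x).le) hab.le
  have hpos : 0 < ∫ t in a..b, d t :=
    intervalIntegral.intervalIntegral_pos_of_pos (hdc.intervalIntegrable a b) hdpos hab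
  linarith

lemma cdf_mem_Ioo (d : ℝ → ℝ) (hdc : Continuous d) (hdpos : ∀ x, 0 < d x)
    [IsProbabilityMeasure (vd d)] (x : ℝ) : cdf (vd d) x ∈ Set.Ioo (0:ℝ) 1 := by
  constructor
  · have h := cdf_sub_cdf d hdc (fun x => (hdpos x).le) (show x - 1 ≤ x by linarith)
    have hpos : 0 < ∫ t in (x-1)..x, d t :=
      intervalIntegral.intervalIntegral_pos_of_pos (hdc.intervalIntegrable _ _) hdpos
        (by linarith)
    have := cdf_nonneg (vd d) (x - 1)
    linarith
  · have h := cdf_sub_cdf d hdc (fun x => (hdpos x).le) (show x ≤ x + 1 by linarith)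
    have hpos : 0 < ∫ t in x..(x+1), d t :=
      intervalIntegral.intervalIntegral_pos_of_pos (hdc.intervalIntegrable _ _) hdpos
        (by linarith)
    have := cdf_le_one (vd d) (x + 1)
    linarith

lemma cdf_surj (d : ℝ → ℝ) (hdc : Continuous d) (hdnn : ∀ x, 0 ≤ d x)
    [IsProbabilityMeasure (vd d)] {s : ℝ} (hs : s ∈ Set.Ioo (0:ℝ) 1) :
    ∃ x, cdf (vd d) x = s := by
  obtain ⟨a, ha⟩ : ∃ a, cdf (vd d) a < s := by
    have := (tendsto_cdf_atBot (vd d)).eventually (eventually_lt_nhds hs.1)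
    rcases this.exists with ⟨a, ha⟩; exact ⟨a, ha⟩
  obtain ⟨b, hb⟩ : ∃ b, s < cdf (vd d) b := by
    have := (tendsto_cdf_atTop (vd d)).eventually (eventually_gt_nhds hs.2)
    rcases this.exists with ⟨b, hb⟩; exact ⟨b, hb⟩
  have hab : a ≤ b := by
    by_contra hh
    exact absurd ((monotone_cdf (vd d)) (le_of_not_ge hh)) (not_le.2 (ha.trans hb))
  have := intermediate_value_Icc hab ((cdf_cont d hdc hdnn).continuousOn)
  obtain ⟨x, _, hx⟩ := this ⟨ha.le, hb.le⟩
  exact ⟨x, hx⟩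

lemma dens_not_lt (d1 d2 : ℝ → ℝ) (h1c : Continuous d1) (h2c : Continuous d2)
    (h1nn : ∀ x, 0 ≤ d1 x) [IsFiniteMeasure (vd d1)]
    (heq : vd d1 = vd d2) (x0 : ℝ) : ¬ d1 x0 < d2 x0 := by
  intro hlt
  set ε := (d2 x0 - d1 x0) / 3 with hε
  have hεpos : 0 < ε := by rw [hε]; linarith
  have hU : IsOpen {x | 2 * ε < d2 x - d1 x} := isOpen_lt continuous_const (h2c.sub h1c)
  have hx0 : x0 ∈ {x | 2 * ε < d2 x - d1 x} := by simp only [Set.mem_setOf_eq]; rw [hε]; linarith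
  obtain ⟨δ, hδpos, hball⟩ := Metric.isOpen_iff.1 hU x0 hx0
  set I := Set.Ioo (x0 - δ) (x0 + δ) with hI
  have hIsub : I ⊆ {x | 2 * ε < d2 x - d1 x} := by
    intro x hx
    apply hball
    rw [Real.ball_eq_Ioo]; exact hx
  have hvol : MeasureTheory.volume I = ENNReal.ofReal (2 * δ) := by
    rw [hI, Real.volume_Ioo]; congr 1; ring
  have hfin : vd d1 I ≠ ⊤ := measure_ne_top _ _
  have hle : vd d1 I + ENNReal.ofReal (2 * ε) * MeasureTheory.volume I ≤ vd d2 I := by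
    rw [vd, vd, withDensity_apply _ measurableSet_Ioo, withDensity_apply _ measurableSet_Ioo]
    calc ∫⁻ x in I, ENNReal.ofReal (d1 x) ∂volume + ENNReal.ofReal (2 * ε) * volume I
        = ∫⁻ x in I, (ENNReal.ofReal (d1 x) + ENNReal.ofReal (2 * ε)) ∂volume := by
          rw [lintegral_add_right _ measurable_const, setLIntegral_const]
      _ ≤ ∫⁻ x in I, ENNReal.ofReal (d2 x) ∂volume := by
          apply setLIntegral_mono (ENNReal.measurable_ofReal.comp h2c.measurable)
          intro x hx
          have := hIsub hx
          rw [← ENNReal.ofReal_add (h1nn x) (by linarith)]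
          apply ENNReal.ofReal_le_ofReal
          simp only [Set.mem_setOf_eq] at this; linarith
  have hpos : 0 < ENNReal.ofReal (2 * ε) * MeasureTheory.volume I := by
    rw [hvol]
    exact ENNReal.mul_pos (by simp; linarith) (by simp; linarith)
  rw [heq] at hle
  have h2fin : vd d2 I ≠ ⊤ := heq ▸ hfin
  have : vd d2 I < vd d2 I :=
    lt_of_lt_of_le (ENNReal.lt_add_right h2fin (ne_of_gt hpos)) hle
  exact lt_irrefl _ this

lemma dens_unique (d1 d2 : ℝ → ℝ) (h1c : Continuous d1) (h2c : Continuous d2)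
    (h1nn : ∀ x, 0 ≤ d1 x) (h2nn : ∀ x, 0 ≤ d2 x) [IsFiniteMeasure (vd d1)]
    (heq : vd d1 = vd d2) (x : ℝ) : d1 x = d2 x := by
  have : IsFiniteMeasure (vd d2) := heq ▸ inferInstance
  rcases lt_trichotomy (d1 x) (d2 x) with h | h | h
  · exact absurd h (dens_not_lt d1 d2 h1c h2c h1nn heq x)
  · exact h
  · exact absurd h (dens_not_lt d2 d1 h2c h1c h2nn heq.symm x)

section Young

variable (S T : ℝ → ℝ)

/-- primitive of S -/
noncomputable def psi (S : ℝ → ℝ) (y : ℝ) : ℝ := ∫ t in (0:ℝ)..y, S t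

noncomputable def psiStar (S T : ℝ → ℝ) (x : ℝ) : ℝ := x * T x - psi S (T x)

lemma S_intInt (hS : Monotone S) (a b : ℝ) : IntervalIntegrable S MeasureTheory.volume a b :=
  (hS.monotoneOn _).intervalIntegrable

lemma young (hS : Monotone S) (hST : ∀ x, S (T x) = x) (x y : ℝ) :
    x * y ≤ psi S y + psiStar S T x := by
  rw [psiStar]
  have hadd : psi S y - psi S (T x) = ∫ t in (T x)..y, S t := by
    rw [psi, psi]
    rw [← intervalIntegral.integral_add_adjacent_intervals (S_intInt S hS 0 (T x))
      (S_intInt S hS (T x) y)]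
    ring
  rcases le_total (T x) y with h | h
  · have hge : x * (y - T x) ≤ ∫ t in (T x)..y, S t := by
      have : ∫ t in (T x)..y, (x : ℝ) ≤ ∫ t in (T x)..y, S t := by
        apply intervalIntegral.integral_mono_on h (intervalIntegrable_const) (S_intInt S hS _ _)
        intro t ht
        rw [← hST x]
        exact hS ht.1
      simpa [mul_comm] using this
    nlinarith [hadd, hge]
  · have hle : ∫ t in y..(T x), S t ≤ x * (T x - y) := by
      have : ∫ t in y..(T x), S t ≤ ∫ t in y..(T x), (x:ℝ) := by
        apply intervalIntegral.integral_mono_on h (S_intInt S hS _ _) (intervalIntegrable_const)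
        intro t ht
        rw [← hST x]
        exact hS ht.2
      simpa [mul_comm] using this
    have hadd' : psi S (T x) - psi S y = ∫ t in y..(T x), S t := by
      rw [psi, psi, ← intervalIntegral.integral_add_adjacent_intervals (S_intInt S hS 0 y)
        (S_intInt S hS y (T x))]
      ring
    nlinarith [hadd', hle]

lemma young_eq (hTS : ∀ y, T (S y) = y) (y : ℝ) :
    S y * y = psi S y + psiStar S T (S y) := by
  rw [psiStar, hTS]; ring

lemma psi_cont (hS : Monotone S) : Continuous (psi S) :=
  intervalIntegral.continuous_primitive (fun a b => S_intInt S hS a b) 0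

lemma psi_abs_le (hS : Monotone S) (y : ℝ) : |psi S y| ≤ |y| * |S 0| + |y| * |S y| := by
  rcases le_total 0 y with h | h
  · have h1 : psi S y ≤ y * S y := by
      have : ∫ t in (0:ℝ)..y, S t ≤ ∫ t in (0:ℝ)..y, S y :=
        intervalIntegral.integral_mono_on h (S_intInt S hS _ _) intervalIntegrable_const
          (fun t ht => hS ht.2)
      simpa [psi] using this
    have h2 : y * S 0 ≤ psi S y := by
      have : ∫ t in (0:ℝ)..y, S 0 ≤ ∫ t in (0:ℝ)..y, S t :=
        intervalIntegral.integral_mono_on h intervalIntegrable_const (S_intInt S hS _ _)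
          (fun t ht => hS ht.1)
      simpa [psi] using this
    rw [abs_of_nonneg h]
    rcases abs_cases (psi S y) with ⟨he, _⟩ | ⟨he, _⟩ <;> rw [he] <;>
      nlinarith [abs_nonneg (S 0), abs_nonneg (S y), le_abs_self (S 0), le_abs_self (S y),
        neg_abs_le (S 0), neg_abs_le (S y)]
  · have hps : psi S y = - ∫ t in y..(0:ℝ), S t := by
      rw [psi, intervalIntegral.integral_symm]
    have h1 : psi S y ≤ y * S y := by
      have : ∫ t in y..(0:ℝ), S y ≤ ∫ t in y..(0:ℝ), S t :=
        intervalIntegral.integral_mono_on h intervalIntegrable_const (S_intInt S hS _ _)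
          (fun t ht => hS ht.1)
      simp only [intervalIntegral.integral_const, smul_eq_mul] at this
      nlinarith [this, hps]
    have h2 : y * S 0 ≤ psi S y := by
      have : ∫ t in y..(0:ℝ), S t ≤ ∫ t in y..(0:ℝ), S 0 :=
        intervalIntegral.integral_mono_on h (S_intInt S hS _ _) intervalIntegrable_const
          (fun t ht => hS ht.2)
      simp only [intervalIntegral.integral_const, smul_eq_mul] at this
      nlinarith [this, hps]
    rw [abs_of_nonpos h]
    rcases abs_cases (psi S y) with ⟨he, _⟩ | ⟨he, _⟩ <;> rw [he] <;>
      nlinarith [abs_nonneg (S 0), abs_nonneg (S y), le_abs_self (S 0), le_abs_self (S y),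
        neg_abs_le (S 0), neg_abs_le (S y)]

end Young

lemma integrable_of_lintegral_lt {α : Type*} [MeasurableSpace α] (μ : Measure α) {φ : α → ℝ} (hφm : AEStronglyMeasurable φ μ)
    (hφnn : ∀ x, 0 ≤ φ x) (h : (∫⁻ x, ENNReal.ofReal (φ x) ∂μ) < ⊤) : Integrable φ μ :=
  ⟨hφm, (hasFiniteIntegral_iff_ofReal (Filter.Eventually.of_forall hφnn)).2 h⟩

lemma key_pointwise (S T : ℝ → ℝ) (hS : Monotone S) (hTS : ∀ y, T (S y) = y)
    (hST : ∀ x, S (T x) = x) (x y : ℝ) :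
    (S y - y) ^ 2 + (x ^ 2 - 2 * psiStar S T x) - ((S y) ^ 2 - 2 * psiStar S T (S y))
      ≤ (x - y) ^ 2 := by
  have h1 := young S T hS hST x y
  have h2 := young_eq S T hTS y
  nlinarith [h1, h2]

lemma monotone_coupling_optimal
    (f g : Measure ℝ) [IsProbabilityMeasure f] [IsProbabilityMeasure g]
    (hf2 : (∫⁻ x, ENNReal.ofReal (x ^ 2) ∂f) < ⊤) (hg2 : (∫⁻ x, ENNReal.ofReal (x ^ 2) ∂g) < ⊤)
    (S T : ℝ → ℝ) (hS : Monotone S) (hT : Monotone T)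
    (hTS : ∀ y, T (S y) = y) (hST : ∀ x, S (T x) = x)
    (hmap : g.map S = f)
    (γ : Measure (ℝ × ℝ)) [IsProbabilityMeasure γ]
    (h1 : γ.map Prod.fst = f) (h2 : γ.map Prod.snd = g) :
    ∫⁻ y, ENNReal.ofReal ((S y - y) ^ 2) ∂g ≤ ∫⁻ p, ENNReal.ofReal ((p.1 - p.2) ^ 2) ∂γ := by
  have hSm : Measurable S := hS.measurable
  have hTm : Measurable T := hT.measurable
  have hmapT : f.map T = g := by
    rw [← hmap, Measure.map_map hTm hSm]
    have : T ∘ S = id := funext hTS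
    rw [this, Measure.map_id]
  -- integrability of squares
  have hx2f : Integrable (fun x => x ^ 2) f :=
    integrable_of_lintegral_lt f (continuous_pow 2).aestronglyMeasurable (fun x => sq_nonneg x) hf2
  have hy2g : Integrable (fun y => y ^ 2) g :=
    integrable_of_lintegral_lt g (continuous_pow 2).aestronglyMeasurable (fun x => sq_nonneg x) hg2
  have hS2g : Integrable (fun y => (S y) ^ 2) g := by
    have := (integrable_map_measure (continuous_pow 2).aestronglyMeasurable
      hSm.aemeasurable).mp (hmap ▸ hx2f)
    exact this
  have hT2f : Integrable (fun x => (T x) ^ 2) f := by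
    have := (integrable_map_measure (continuous_pow 2).aestronglyMeasurable
      hTm.aemeasurable).mp (hmapT ▸ hy2g)
    exact this
  -- psi integrable w.r.t. g
  have hpsiInt : Integrable (psi S) g := by
    have hbint : Integrable (fun y => |S 0| * ((1 + y ^ 2) / 2) + ((y ^ 2 + (S y) ^ 2) / 2)) g := by
      apply Integrable.add
      · exact (((integrable_const (1:ℝ)).add hy2g).div_const 2).const_mul _
      · exact ((hy2g.add hS2g).div_const 2)
    apply Integrable.mono' hbint (psi_cont S hS).aestronglyMeasurable
    · filter_upwards with y
      have h := psi_abs_le S hS y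
      have hy : |y| ≤ (1 + y ^ 2) / 2 := by
        nlinarith [abs_nonneg y, sq_abs y, sq_nonneg (|y| - 1)]
      have hySy : |y| * |S y| ≤ (y ^ 2 + (S y) ^ 2) / 2 := by
        nlinarith [sq_nonneg (|y| - |S y|), sq_abs y, sq_abs (S y)]
      calc ‖psi S y‖ = |psi S y| := rfl
        _ ≤ |y| * |S 0| + |y| * |S y| := h
        _ ≤ |S 0| * ((1 + y ^ 2) / 2) + ((y ^ 2 + (S y) ^ 2) / 2) := by
            nlinarith [abs_nonneg (S 0), abs_nonneg y, abs_nonneg (S y)]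
  -- chi
  set χ : ℝ → ℝ := fun x => x ^ 2 - 2 * psiStar S T x with hχ
  have hχmeas : Measurable χ := by
    apply Measurable.sub ((continuous_pow 2).measurable)
    apply Measurable.const_mul
    exact (measurable_id.mul hTm).sub ((psi_cont S hS).measurable.comp hTm)
  have hpsiTf : Integrable (fun x => psi S (T x)) f :=
    (integrable_map_measure (psi_cont S hS).aestronglyMeasurable hTm.aemeasurable).mp
      (hmapT ▸ hpsiInt)
  have hxTf : Integrable (fun x => x * T x) f := by
    apply Integrable.mono' (g := fun x => (x ^ 2 + (T x) ^ 2) / 2) ((hx2f.add hT2f).div_const 2)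
      ((measurable_id.mul hTm).aestronglyMeasurable)
    filter_upwards with x
    simp only [Pi.mul_apply, id_eq]
    rw [Real.norm_eq_abs, abs_mul]
    nlinarith [sq_nonneg (|x| - |T x|), sq_abs x, sq_abs (T x), abs_nonneg x, abs_nonneg (T x)]
  have hχf : Integrable χ f := by
    have : χ = fun x => x ^ 2 - 2 * (x * T x) + 2 * psi S (T x) := by
      funext x; simp only [hχ, psiStar]; ring
    rw [this]
    exact (hx2f.sub (hxTf.const_mul 2)).add (hpsiTf.const_mul 2)
  have hχSg : Integrable (fun y => χ (S y)) g :=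
    (integrable_map_measure hχmeas.aestronglyMeasurable hSm.aemeasurable).mp (hmap ▸ hχf)
  -- φ1
  set φ1 : ℝ → ℝ := fun y => (S y - y) ^ 2 with hφ1
  have hφ1meas : Measurable φ1 := ((hSm.sub measurable_id).pow_const 2)
  have hφ1int : Integrable φ1 g := by
    have : φ1 = fun y => (S y) ^ 2 - 2 * (S y * y) + y ^ 2 := by funext y; rw [hφ1]; ring
    rw [this]
    have hSyY : Integrable (fun y => S y * y) g := by
      apply Integrable.mono' (g := fun y => ((S y) ^ 2 + y ^ 2) / 2) ((hS2g.add hy2g).div_const 2)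
        ((hSm.mul measurable_id).aestronglyMeasurable)
      filter_upwards with y
      simp only [Pi.mul_apply, id_eq]
      rw [Real.norm_eq_abs, abs_mul]
      nlinarith [sq_nonneg (|S y| - |y|), sq_abs y, sq_abs (S y), abs_nonneg y, abs_nonneg (S y)]
    exact (hS2g.sub (hSyY.const_mul 2)).add hy2g
  -- main case split
  by_cases hcost : (∫⁻ p, ENNReal.ofReal ((p.1 - p.2) ^ 2) ∂γ) = ⊤
  · rw [hcost]; exact le_top
  · have hcostlt : (∫⁻ p, ENNReal.ofReal ((p.1 - p.2) ^ 2) ∂γ) < ⊤ := lt_top_iff_ne_top.2 hcost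
    have hcostint : Integrable (fun p : ℝ × ℝ => (p.1 - p.2) ^ 2) γ :=
      integrable_of_lintegral_lt γ (((continuous_fst.sub continuous_snd).pow 2).aestronglyMeasurable)
        (fun p => sq_nonneg _) hcostlt
    have hφ2γ : Integrable (fun p : ℝ × ℝ => φ1 p.2) γ :=
      (integrable_map_measure hφ1meas.aestronglyMeasurable measurable_snd.aemeasurable).mp
        (h2 ▸ hφ1int)
    have hχ1γ : Integrable (fun p : ℝ × ℝ => χ p.1) γ :=
      (integrable_map_measure hχmeas.aestronglyMeasurable measurable_fst.aemeasurable).mp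
        (h1 ▸ hχf)
    have hχ2γ : Integrable (fun p : ℝ × ℝ => χ (S p.2)) γ :=
      (integrable_map_measure (hχmeas.comp hSm).aestronglyMeasurable
        measurable_snd.aemeasurable).mp (h2 ▸ hχSg)
    have hmono : ∫ p : ℝ × ℝ, (φ1 p.2 + χ p.1 - χ (S p.2)) ∂γ
        ≤ ∫ p : ℝ × ℝ, (p.1 - p.2) ^ 2 ∂γ := by
      have hBint : Integrable (fun p : ℝ × ℝ => φ1 p.2 + χ p.1 - χ (S p.2)) γ :=
        Integrable.sub (Integrable.add hφ2γ hχ1γ) hχ2γ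
      apply integral_mono hBint hcostint
      intro p
      exact key_pointwise S T hS hTS hST p.1 p.2
    have hsplit : ∫ p : ℝ × ℝ, (φ1 p.2 + χ p.1 - χ (S p.2)) ∂γ
        = (∫ p : ℝ × ℝ, φ1 p.2 ∂γ) + (∫ p : ℝ × ℝ, χ p.1 ∂γ)
          - ∫ p : ℝ × ℝ, χ (S p.2) ∂γ := by
      have hBadd : Integrable (fun p : ℝ × ℝ => φ1 p.2 + χ p.1) γ :=
        Integrable.add hφ2γ hχ1γ
      rw [integral_sub hBadd hχ2γ, integral_add hφ2γ hχ1γ]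
    have e1 : ∫ p : ℝ × ℝ, φ1 p.2 ∂γ = ∫ y, φ1 y ∂g := by
      rw [← h2, integral_map measurable_snd.aemeasurable
        (h2.symm ▸ hφ1meas.aestronglyMeasurable : AEStronglyMeasurable φ1 (γ.map Prod.snd))]
    have e2 : ∫ p : ℝ × ℝ, χ p.1 ∂γ = ∫ x, χ x ∂f := by
      rw [← h1, integral_map measurable_fst.aemeasurable
        (h1.symm ▸ hχmeas.aestronglyMeasurable : AEStronglyMeasurable χ (γ.map Prod.fst))]
    have e3 : ∫ p : ℝ × ℝ, χ (S p.2) ∂γ = ∫ y, χ (S y) ∂g := by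
      rw [← h2, integral_map measurable_snd.aemeasurable
        (h2.symm ▸ (hχmeas.comp hSm).aestronglyMeasurable :
          AEStronglyMeasurable (fun y => χ (S y)) (γ.map Prod.snd))]
    have e4 : ∫ y, χ (S y) ∂g = ∫ x, χ x ∂f := by
      rw [← hmap, integral_map hSm.aemeasurable
        (hmap.symm ▸ hχmeas.aestronglyMeasurable : AEStronglyMeasurable χ (g.map S))]
    have hfinal : ∫ y, φ1 y ∂g ≤ ∫ p : ℝ × ℝ, (p.1 - p.2) ^ 2 ∂γ := by
      rw [hsplit, e1, e2, e3, e4] at hmono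
      linarith
    calc ∫⁻ y, ENNReal.ofReal (φ1 y) ∂g
        = ENNReal.ofReal (∫ y, φ1 y ∂g) :=
          (ofReal_integral_eq_lintegral_ofReal hφ1int
            (Filter.Eventually.of_forall fun y => sq_nonneg _)).symm
      _ ≤ ENNReal.ofReal (∫ p : ℝ × ℝ, (p.1 - p.2) ^ 2 ∂γ) := ENNReal.ofReal_le_ofReal hfinal
      _ = ∫⁻ p, ENNReal.ofReal ((p.1 - p.2) ^ 2) ∂γ :=
          ofReal_integral_eq_lintegral_ofReal hcostint
            (Filter.Eventually.of_forall fun p => sq_nonneg _)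

lemma costMeas : Measurable (fun p : ℝ × ℝ => ENNReal.ofReal ((p.1 - p.2) ^ 2)) :=
  ENNReal.measurable_ofReal.comp ((continuous_fst.sub continuous_snd).pow 2).measurable

lemma W2sq_le (μ ν : Measure ℝ) (γ : Measure (ℝ × ℝ)) (hγ : IsProbabilityMeasure γ)
    (hfst : γ.map Prod.fst = μ) (hsnd : γ.map Prod.snd = ν) :
    W2sq μ ν ≤ ∫⁻ p, ENNReal.ofReal ((p.1 - p.2) ^ 2) ∂γ := by
  rw [W2sq]
  exact iInf_le_of_le γ (iInf_le_of_le hγ (iInf_le_of_le hfst (iInf_le_of_le hsnd le_rfl)))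

lemma W2sq_le_map (μ : Measure ℝ) [IsProbabilityMeasure μ] (S : ℝ → ℝ) (hSm : Measurable S) :
    W2sq (μ.map S) μ ≤ ∫⁻ y, ENNReal.ofReal ((S y - y) ^ 2) ∂μ := by
  have hm : Measurable fun y : ℝ => (S y, y) := hSm.prodMk measurable_id
  set γ := μ.map (fun y => (S y, y)) with hγdef
  have hγ : IsProbabilityMeasure γ := Measure.isProbabilityMeasure_map hm.aemeasurable
  have hfst : γ.map Prod.fst = μ.map S := by
    rw [hγdef, Measure.map_map measurable_fst hm]; rfl
  have hsnd : γ.map Prod.snd = μ := by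
    rw [hγdef, Measure.map_map measurable_snd hm]
    exact Measure.map_id
  have hcost : ∫⁻ p, ENNReal.ofReal ((p.1 - p.2) ^ 2) ∂γ
      = ∫⁻ y, ENNReal.ofReal ((S y - y) ^ 2) ∂μ := by
    rw [hγdef, lintegral_map costMeas hm]
  exact hcost ▸ W2sq_le _ _ γ hγ hfst hsnd

lemma exists_coupling_le (μ ν : Measure ℝ) [hμ : IsProbabilityMeasure μ]
    [hν : IsProbabilityMeasure ν] {ε : ℝ≥0∞} (hε : ε ≠ 0) :
    ∃ γ : Measure (ℝ × ℝ), IsProbabilityMeasure γ ∧ γ.map Prod.fst = μ ∧ γ.map Prod.snd = ν ∧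
      ∫⁻ p, ENNReal.ofReal ((p.1 - p.2) ^ 2) ∂γ ≤ W2sq μ ν + ε := by
  by_cases h : W2sq μ ν = ⊤
  · refine ⟨μ.prod ν, inferInstance, ?_, ?_, ?_⟩
    · simp
    · simp
    · rw [h]; simp
  · have hlt : W2sq μ ν < W2sq μ ν + ε := ENNReal.lt_add_right h hε
    rw [W2sq] at hlt
    simp only [iInf_lt_iff] at hlt
    obtain ⟨γ, h1, h2, h3, h4⟩ := hlt
    exact ⟨γ, h1, h2, h3, h4.le⟩

lemma map_finset_sum' {ι : Type*} (s : Finset ι) (μ : ι → Measure (ℝ × ℝ))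
    {φ : ℝ × ℝ → ℝ} (hφ : Measurable φ) :
    (∑ i ∈ s, μ i).map φ = ∑ i ∈ s, (μ i).map φ := by
  classical
  induction s using Finset.induction_on with
  | empty => simp
  | insert _ _ hx ih =>
      rw [Finset.sum_insert hx, Finset.sum_insert hx, Measure.map_add _ _ hφ, ih]

lemma W2sq_mixture_le {K : ℕ} (w : Fin K → ℝ) (hw : ∀ k, 0 ≤ w k) (hsum : ∑ k, w k = 1)
    (μ ν : Fin K → Measure ℝ) (hμ : ∀ k, IsProbabilityMeasure (μ k))
    (hν : ∀ k, IsProbabilityMeasure (ν k)) :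
    W2sq (∑ k, ENNReal.ofReal (w k) • μ k) (∑ k, ENNReal.ofReal (w k) • ν k)
      ≤ ∑ k, ENNReal.ofReal (w k) * W2sq (μ k) (ν k) := by
  have hwsum : ∑ k, ENNReal.ofReal (w k) = 1 := by
    rw [← ENNReal.ofReal_sum_of_nonneg (fun k _ => hw k), hsum, ENNReal.ofReal_one]
  apply ENNReal.le_of_forall_pos_le_add
  intro ε hε _
  have hεne : (ε : ℝ≥0∞) ≠ 0 := by exact_mod_cast hε.ne'
  -- choose couplings
  have hchoice : ∀ k : Fin K, ∃ γ : Measure (ℝ × ℝ), IsProbabilityMeasure γ ∧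
      γ.map Prod.fst = μ k ∧ γ.map Prod.snd = ν k ∧
      ∫⁻ p, ENNReal.ofReal ((p.1 - p.2) ^ 2) ∂γ ≤ W2sq (μ k) (ν k) + ε := fun k => by
    have := hμ k; have := hν k
    exact exists_coupling_le (μ k) (ν k) hεne
  choose γ hγp hγ1 hγ2 hγc using hchoice
  set Γ : Measure (ℝ × ℝ) := ∑ k, ENNReal.ofReal (w k) • γ k with hΓ
  have hΓp : IsProbabilityMeasure Γ := by
    constructor
    rw [hΓ, Measure.finset_sum_apply]
    simp only [Measure.smul_apply, smul_eq_mul]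
    calc ∑ k, ENNReal.ofReal (w k) * (γ k) Set.univ
        = ∑ k, ENNReal.ofReal (w k) := by
          apply Finset.sum_congr rfl; intro k _; rw [(hγp k).measure_univ, mul_one]
      _ = 1 := hwsum
  have hΓ1 : Γ.map Prod.fst = ∑ k, ENNReal.ofReal (w k) • μ k := by
    rw [hΓ, map_finset_sum' _ _ measurable_fst]
    apply Finset.sum_congr rfl; intro k _
    rw [Measure.map_smul, hγ1 k]
  have hΓ2 : Γ.map Prod.snd = ∑ k, ENNReal.ofReal (w k) • ν k := by
    rw [hΓ, map_finset_sum' _ _ measurable_snd]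
    apply Finset.sum_congr rfl; intro k _
    rw [Measure.map_smul, hγ2 k]
  calc W2sq (∑ k, ENNReal.ofReal (w k) • μ k) (∑ k, ENNReal.ofReal (w k) • ν k)
      ≤ ∫⁻ p, ENNReal.ofReal ((p.1 - p.2) ^ 2) ∂Γ := W2sq_le _ _ Γ hΓp hΓ1 hΓ2
    _ = ∑ k, ENNReal.ofReal (w k) * ∫⁻ p, ENNReal.ofReal ((p.1 - p.2) ^ 2) ∂(γ k) := by
        rw [hΓ, lintegral_finset_sum_measure]
        apply Finset.sum_congr rfl; intro k _
        rw [lintegral_smul_measure, smul_eq_mul]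
    _ ≤ ∑ k, ENNReal.ofReal (w k) * (W2sq (μ k) (ν k) + ε) := by
        apply Finset.sum_le_sum; intro k _
        exact mul_le_mul_right (hγc k) _
    _ = (∑ k, ENNReal.ofReal (w k) * W2sq (μ k) (ν k)) + ε := by
        have : ∀ k : Fin K, ENNReal.ofReal (w k) * (W2sq (μ k) (ν k) + ε)
            = ENNReal.ofReal (w k) * W2sq (μ k) (ν k) + ENNReal.ofReal (w k) * ε :=
          fun k => mul_add _ _ _
        rw [Finset.sum_congr rfl (fun k _ => this k), Finset.sum_add_distrib,
          ← Finset.sum_mul, hwsum, one_mul]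


lemma sum_smul_vd {K : ℕ} (w : Fin K → ℝ) (hw : ∀ k, 0 ≤ w k) (h : Fin K → ℝ → ℝ)
    (hm : ∀ k, Measurable (h k)) (hnn : ∀ k x, 0 ≤ h k x) :
    ∑ k, ENNReal.ofReal (w k) • vd (h k) = vd (fun x => ∑ k, w k * h k x) := by
  refine Measure.ext fun A hA => ?_
  rw [Measure.finset_sum_apply, vd, withDensity_apply _ hA]
  have hmk : ∀ k ∈ Finset.univ, Measurable fun x =>
      ENNReal.ofReal (w k) * ENNReal.ofReal (h k x) :=
    fun k _ => ((hm k).ennreal_ofReal).const_mul _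
  calc ∑ k, (ENNReal.ofReal (w k) • vd (h k)) A
      = ∑ k, ∫⁻ x in A, ENNReal.ofReal (w k) * ENNReal.ofReal (h k x) ∂volume := by
        apply Finset.sum_congr rfl; intro k _
        rw [Measure.smul_apply, vd, withDensity_apply _ hA, smul_eq_mul,
          lintegral_const_mul _ ((hm k).ennreal_ofReal)]
    _ = ∫⁻ x in A, ∑ k, ENNReal.ofReal (w k) * ENNReal.ofReal (h k x) ∂volume :=
        (lintegral_finset_sum _ hmk).symm
    _ = ∫⁻ x in A, ENNReal.ofReal (∑ k, w k * h k x) ∂volume := by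
        apply lintegral_congr; intro x
        rw [ENNReal.ofReal_sum_of_nonneg (fun k _ => mul_nonneg (hw k) (hnn k x))]
        exact Finset.sum_congr rfl fun k _ => (ENNReal.ofReal_mul (hw k)).symm


set_option maxHeartbeats 1000000 in
/-- Equality case of the mixture majorization inequality: for f, g with continuous
strictly positive densities and a mixture decomposition f = Σ π_k f_k, the components
g_k(x) = g(x) · f_k(F⁻¹(G(x))) / Σ_l π_l f_l(F⁻¹(G(x))) give a mixture decomposition
g = Σ π_k g_k with W₂²(f, g) = Σ_k π_k W₂²(f_k, g_k). -/
theorem mixture_majorization_equality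
    (K : ℕ) (hK : 0 < K) (w : Fin K → ℝ) (hw : ∀ k, 0 ≤ w k) (hsum : ∑ k, w k = 1)
    (f g : Measure ℝ) (hf : MemP2 f) (hg : MemP2 g)
    (df dg : ℝ → ℝ) (hdfc : Continuous df) (hdgc : Continuous dg)
    (hdfpos : ∀ x, 0 < df x) (hdgpos : ∀ x, 0 < dg x)
    (hfd : f = MeasureTheory.volume.withDensity (fun x => ENNReal.ofReal (df x)))
    (hgd : g = MeasureTheory.volume.withDensity (fun x => ENNReal.ofReal (dg x)))
    -- F⁻¹ : the inverse of the CDF F of f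
    (Finv : ℝ → ℝ)
    (hFinv : ∀ x : ℝ, Finv (ProbabilityTheory.cdf f x) = x)
    (hFinv' : ∀ s ∈ Set.Ioo (0 : ℝ) 1, ProbabilityTheory.cdf f (Finv s) = s)
    -- the mixture decomposition f = Σ π_k f_k with continuous component densities
    (dfk : Fin K → ℝ → ℝ) (hdfkc : ∀ k, Continuous (dfk k)) (hdfknn : ∀ k x, 0 ≤ dfk k x)
    (hfkprob : ∀ k, IsProbabilityMeasure
      (MeasureTheory.volume.withDensity fun x => ENNReal.ofReal (dfk k x)))
    (hfdec : f = ∑ k, ENNReal.ofReal (w k) •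
      MeasureTheory.volume.withDensity fun x => ENNReal.ofReal (dfk k x)) :
    -- define g_k by the stated formula
    (fun (gk : Fin K → ℝ → ℝ) =>
      (∀ k, IsProbabilityMeasure
          (MeasureTheory.volume.withDensity fun x => ENNReal.ofReal (gk k x))) ∧
      g = (∑ k, ENNReal.ofReal (w k) •
          MeasureTheory.volume.withDensity fun x => ENNReal.ofReal (gk k x)) ∧
      W2sq f g = ∑ k, ENNReal.ofReal (w k) *
        W2sq (MeasureTheory.volume.withDensity fun x => ENNReal.ofReal (dfk k x))
          (MeasureTheory.volume.withDensity fun x => ENNReal.ofReal (gk k x)))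
      (fun k x => dg x * dfk k (Finv (ProbabilityTheory.cdf g x)) /
        ∑ l, w l * dfk l (Finv (ProbabilityTheory.cdf g x))) := by
  haveI hfp : IsProbabilityMeasure f := hf.1
  haveI hgp : IsProbabilityMeasure g := hg.1
  have hfv : f = vd df := hfd
  have hgv : g = vd dg := hgd
  haveI pdf : IsProbabilityMeasure (vd df) := hfv ▸ hf.1
  haveI pdg : IsProbabilityMeasure (vd dg) := hgv ▸ hg.1
  have hdfnn : ∀ x, 0 ≤ df x := fun x => (hdfpos x).le
  have hdgnn : ∀ x, 0 ≤ dg x := fun x => (hdgpos x).le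
  have hFmono : Monotone (cdf f) := monotone_cdf f
  have hFIoo : ∀ x, cdf f x ∈ Set.Ioo (0:ℝ) 1 := by
    intro x; rw [hfv]; exact cdf_mem_Ioo df hdfc hdfpos x
  have hGIoo : ∀ x, cdf g x ∈ Set.Ioo (0:ℝ) 1 := by
    intro x; rw [hgv]; exact cdf_mem_Ioo dg hdgc hdgpos x
  have hGsurj : ∀ s ∈ Set.Ioo (0:ℝ) 1, ∃ x, cdf g x = s := by
    intro s hs
    have := cdf_surj dg hdgc hdgnn hs
    rw [← hgv] at this; exact this
  have hGsm : StrictMono (cdf g) := by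
    have := cdf_smono dg hdgc hdgpos
    rw [← hgv] at this; exact this
  set S : ℝ → ℝ := fun y => Finv (cdf g y) with hSdef
  have hSsm : StrictMono S := by
    intro a b hab
    have h1 : cdf g a < cdf g b := hGsm hab
    by_contra hc
    push_neg at hc
    have hc' : Finv (cdf g b) ≤ Finv (cdf g a) := hc
    have h2 := hFmono hc'
    rw [hFinv' _ (hGIoo b), hFinv' _ (hGIoo a)] at h2
    exact absurd h2 (not_le.2 h1)
  have hSsurj : Function.Surjective S := by
    intro z
    obtain ⟨x, hx⟩ := hGsurj (cdf f z) (hFIoo z)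
    refine ⟨x, ?_⟩
    show Finv (cdf g x) = z
    rw [hx, hFinv]
  set e : ℝ ≃o ℝ := StrictMono.orderIsoOfSurjective S hSsm hSsurj with hedef
  have hecoe : ∀ y, e y = S y := fun y => by
    rw [hedef, StrictMono.coe_orderIsoOfSurjective]
  set T : ℝ → ℝ := fun x => e.symm x with hTdef
  have hST : ∀ x, S (T x) = x := fun x => by
    rw [hTdef, ← hecoe (e.symm x)]; exact e.apply_symm_apply x
  have hTS : ∀ y, T (S y) = y := fun y => by
    show e.symm (S y) = y
    rw [← hecoe y]; exact e.symm_apply_apply y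
  have hT : Monotone T := fun a b hab => e.symm.monotone hab
  have hSmono : Monotone S := hSsm.monotone
  have hSm : Measurable S := hSmono.measurable
  have hSle : ∀ x a, S x ≤ a ↔ x ≤ T a := fun x a => by
    constructor
    · intro h
      have := hT h
      rw [hTS] at this; exact this
    · intro h
      have := hSmono h
      rw [hST] at this; exact this
  have hmap : g.map S = f := by
    haveI : IsProbabilityMeasure (g.map S) := Measure.isProbabilityMeasure_map hSm.aemeasurable
    refine Measure.ext_of_Iic (g.map S) f (fun a => ?_)
    rw [Measure.map_apply hSm measurableSet_Iic]
    have hpre : S ⁻¹' Set.Iic a = Set.Iic (T a) := by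
      ext x
      simp only [Set.mem_preimage, Set.mem_Iic]
      exact hSle x a
    have hcdfeq : cdf g (T a) = cdf f a := by
      have h1 : cdf f (S (T a)) = cdf g (T a) := hFinv' _ (hGIoo (T a))
      rw [hST] at h1; exact h1.symm
    rw [hpre, ← ofReal_cdf g (T a), ← ofReal_cdf f a, hcdfeq]
  -- density of f is the weighted sum of the dfk
  have hd2c : Continuous (fun x => ∑ k, w k * dfk k x) :=
    continuous_finset_sum _ (fun k _ => (continuous_const.mul (hdfkc k)))
  have hd2nn : ∀ x, 0 ≤ ∑ k, w k * dfk k x :=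
    fun x => Finset.sum_nonneg fun k _ => mul_nonneg (hw k) (hdfknn k x)
  have hfdec' : f = ∑ k, ENNReal.ofReal (w k) • vd (dfk k) := hfdec
  have hvd2 : vd df = vd (fun x => ∑ k, w k * dfk k x) := by
    rw [← hfv, hfdec']
    exact sum_smul_vd w hw dfk (fun k => (hdfkc k).measurable) hdfknn
  have hdfsum : ∀ x, df x = ∑ k, w k * dfk k x :=
    fun x => dens_unique df _ hdfc hd2c hdfnn hd2nn hvd2 x
  -- the components gk
  set gk : Fin K → ℝ → ℝ :=
    fun k x => dg x * dfk k (S x) / ∑ l, w l * dfk l (S x) with hgkdef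
  have hden : ∀ x, (∑ l, w l * dfk l (S x)) = df (S x) := fun x => (hdfsum (S x)).symm
  have hgk_eq : ∀ k x, gk k x = dg x * (dfk k (S x) / df (S x)) := by
    intro k x
    rw [hgkdef]
    simp only
    rw [hden x, mul_div_assoc]
  have hgknn : ∀ k x, 0 ≤ gk k x := by
    intro k x
    rw [hgk_eq]
    exact mul_nonneg (hdgnn x) (div_nonneg (hdfknn k (S x)) (hdfnn (S x)))
  have hgkm : ∀ k, Measurable (gk k) := by
    intro k
    apply Measurable.div
    · exact hdgc.measurable.mul ((hdfkc k).measurable.comp hSm)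
    · exact (Finset.measurable_sum _ (fun l _ =>
        ((hdfkc l).measurable.comp hSm).const_mul _))
  -- quotient density
  have hφc : ∀ k, Continuous (fun x => dfk k x / df x) :=
    fun k => (hdfkc k).div hdfc (fun x => (hdfpos x).ne')
  set φ : Fin K → ℝ → ℝ≥0∞ := fun k x => ENNReal.ofReal (dfk k x / df x) with hφdef
  have hφm : ∀ k, Measurable (φ k) := fun k => (hφc k).measurable.ennreal_ofReal
  have hgkw : ∀ k, vd (gk k) = g.withDensity (fun x => φ k (S x)) := by
    intro k
    rw [hgv, vd, vd, ← withDensity_mul _ hdgc.measurable.ennreal_ofReal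
      (show Measurable fun x => φ k (S x) from (hφm k).comp hSm)]
    congr 1
    funext x
    simp only [Pi.mul_apply]
    rw [hgk_eq k x, ENNReal.ofReal_mul (hdgnn x)]
  have hmapk : ∀ k, (vd (gk k)).map S = vd (dfk k) := by
    intro k
    have h1 : (g.withDensity (fun x => φ k (S x))).map S = f.withDensity (φ k) := by
      refine Measure.ext fun A hA => ?_
      rw [Measure.map_apply hSm hA, withDensity_apply _ (hSm hA), withDensity_apply _ hA,
        ← hmap, setLIntegral_map hA (hφm k) hSm]
    have h2 : f.withDensity (φ k) = vd (dfk k) := by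
      rw [hfv, vd, vd, ← withDensity_mul _ hdfc.measurable.ennreal_ofReal (hφm k)]
      congr 1
      funext x
      simp only [Pi.mul_apply, hφdef]
      rw [← ENNReal.ofReal_mul (hdfnn x)]
      congr 1
      field_simp [(hdfpos x).ne']
    rw [hgkw k, h1, h2]
  have hgkprob : ∀ k, IsProbabilityMeasure (vd (gk k)) := by
    intro k
    constructor
    have h1 := congrArg (fun μ : Measure ℝ => μ Set.univ) (hmapk k)
    rw [Measure.map_apply hSm MeasurableSet.univ, Set.preimage_univ] at h1
    rw [h1]
    exact (hfkprob k).measure_univ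
  -- mixture decomposition of g
  have hgksum : ∑ k, ENNReal.ofReal (w k) • vd (gk k)
      = vd (fun x => ∑ k, w k * gk k x) := sum_smul_vd w hw gk hgkm hgknn
  have hgkptsum : ∀ x, (∑ k, w k * gk k x) = dg x := by
    intro x
    have h1 : ∀ k, w k * gk k x = dg x / df (S x) * (w k * dfk k (S x)) := by
      intro k; rw [hgk_eq k x]; ring
    rw [Finset.sum_congr rfl (fun k _ => h1 k), ← Finset.mul_sum, hden x]
    exact div_mul_cancel₀ (dg x) (hdfpos (S x)).ne'
  have hgdec : g = ∑ k, ENNReal.ofReal (w k) • vd (gk k) := by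
    rw [hgksum]
    have : (fun x => ∑ k, w k * gk k x) = dg := funext hgkptsum
    rw [this]
    exact hgv
  -- final chain
  set I : ℝ≥0∞ := ∫⁻ y, ENNReal.ofReal ((S y - y) ^ 2) ∂g with hIdef
  have step2 : ∀ k, W2sq (vd (dfk k)) (vd (gk k))
      ≤ ∫⁻ y, ENNReal.ofReal ((S y - y) ^ 2) ∂(vd (gk k)) := by
    intro k
    haveI := hgkprob k
    have := W2sq_le_map (vd (gk k)) S hSm
    rw [hmapk k] at this
    exact this
  have step3 : ∑ k, ENNReal.ofReal (w k)
      * ∫⁻ y, ENNReal.ofReal ((S y - y) ^ 2) ∂(vd (gk k)) = I := by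
    rw [hIdef, hgdec, lintegral_finset_sum_measure]
    apply Finset.sum_congr rfl; intro k _
    rw [lintegral_smul_measure, smul_eq_mul]
  have up : W2sq f g ≤ ∑ k, ENNReal.ofReal (w k) * W2sq (vd (dfk k)) (vd (gk k)) := by
    rw [hfdec', hgdec]
    exact W2sq_mixture_le w hw hsum _ _ hfkprob hgkprob
  have mid : ∑ k, ENNReal.ofReal (w k) * W2sq (vd (dfk k)) (vd (gk k)) ≤ I := by
    rw [← step3]
    exact Finset.sum_le_sum fun k _ => mul_le_mul_right (step2 k) _
  have low : I ≤ W2sq f g := by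
    rw [W2sq]
    refine le_iInf fun γ => le_iInf fun hγ => le_iInf fun h1 => le_iInf fun h2 => ?_
    haveI := hγ
    exact monotone_coupling_optimal f g hf.2 hg.2 S T hSmono hT hTS hST hmap γ h1 h2
  have hW2eq : W2sq f g = ∑ k, ENNReal.ofReal (w k) * W2sq (vd (dfk k)) (vd (gk k)) :=
    le_antisymm up (mid.trans low)
  exact ⟨hgkprob, hgdec, hW2eq⟩
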